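/- In any simple graph G, the number of subgraphs isomorphic to the paw graph (a triangle with a pendant edge) equals ∑_{{st,uv}∈Q} (a_{su} + a_{tv})(a_{sv} + a_{tu}). -/

import Mathlib

open Finset BigOperators SimpleGraph

namespace CrossVar

variable {V : Type} [Fintype V] [DecidableEq V]

/-- Adjacency indicator `a_{xy}`. -/
def a (G : SimpleGraph V) [DecidableRel G.Adj] (x y : V) : ℚ := if G.Adj x y then 1 else 0

/-- Degree `k_v` as a rational number. -/
def deg (G : SimpleGraph V) [DecidableRel G.Adj] (v : V) : ℚ := (G.degree v : ℚ)

/-- Sum over the set `Q` of unordered pairs `{st, uv}` of vertex-disjoint (independent) edges of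
`G` of a function `f s t u v` (intended to be invariant under `s ↔ t`, `u ↔ v` and
`(s,t) ↔ (u,v)`).  Each unordered pair of independent edges corresponds to exactly `8` ordered
tuples `(s,t,u,v)`, whence the division by `8`. -/
def Qsum (G : SimpleGraph V) [DecidableRel G.Adj] (f : V → V → V → V → ℚ) : ℚ :=
  (∑ s, ∑ t, ∑ u, ∑ v,
    if G.Adj s t ∧ G.Adj u v ∧ s ≠ u ∧ s ≠ v ∧ t ≠ u ∧ t ≠ v then f s t u v else 0) / 8

/-- Sum over the unordered edges `{s,t} ∈ E` of `f s t` (intended for symmetric `f`);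
each unordered edge corresponds to two ordered adjacent pairs, whence the division by `2`. -/
def edgeSum (G : SimpleGraph V) [DecidableRel G.Adj] (f : V → V → ℚ) : ℚ :=
  (∑ s, ∑ t, if G.Adj s t then f s t else 0) / 2

/-- The number of subgraphs of `G` isomorphic to `F` (each unlabeled copy counted once). -/
noncomputable def copyCount {α : Type} (G : SimpleGraph V) (F : SimpleGraph α) : ℕ :=
  Nat.card {H : G.Subgraph // Nonempty (H.coe ≃g F)}

/-- `ξ(v)`: the sum of the degrees of the neighbours of `v`. -/
def xi (G : SimpleGraph V) [DecidableRel G.Adj] (v : V) : ℚ :=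
  ∑ u ∈ G.neighborFinset v, deg G u

/-- The paw graph: a triangle `{0,1,2}` with a pendant edge `{2,3}`. -/
def pawGraph : SimpleGraph (Fin 4) :=
  SimpleGraph.fromRel (fun x y => (x, y) ∈ [((0 : Fin 4), (1 : Fin 4)), (0, 2), (1, 2), (2, 3)])

/-- `C₃ ⊕ P₂`: the disjoint union of a triangle `{0,1,2}` and an edge `{3,4}`. -/
def triEdgeGraph : SimpleGraph (Fin 5) :=
  SimpleGraph.fromRel (fun x y => (x, y) ∈ [((0 : Fin 5), (1 : Fin 5)), (0, 2), (1, 2), (3, 4)])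

set_option linter.unusedSectionVars false

def pawRel (s t u v x y : V) : Prop :=
  (x = s ∧ y = t) ∨ (x = t ∧ y = s) ∨ (x = s ∧ y = u) ∨ (x = u ∧ y = s) ∨
  (x = s ∧ y = v) ∨ (x = v ∧ y = s) ∨ (x = u ∧ y = v) ∨ (x = v ∧ y = u)

instance pawGraph.adjDecidable : DecidableRel pawGraph.Adj := fun a b =>
  decidable_of_iff _
    (SimpleGraph.fromRel_adj
      (fun x y => (x, y) ∈ [((0 : Fin 4), (1 : Fin 4)), (0, 2), (1, 2), (2, 3)]) a b).symm

abbrev cond (G : SimpleGraph V) [DecidableRel G.Adj] (s t u v : V) : Prop :=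
  G.Adj s t ∧ G.Adj u v ∧ G.Adj s u ∧ G.Adj s v ∧ t ≠ u ∧ t ≠ v

def pawSub (G : SimpleGraph V) [DecidableRel G.Adj] (s t u v : V) : G.Subgraph where
  verts := {s, t, u, v}
  Adj x y := G.Adj x y ∧ pawRel s t u v x y
  adj_sub h := h.1
  edge_vert h := by
    rcases h.2 with ⟨rfl,rfl⟩|⟨rfl,rfl⟩|⟨rfl,rfl⟩|⟨rfl,rfl⟩|⟨rfl,rfl⟩|⟨rfl,rfl⟩|⟨rfl,rfl⟩|⟨rfl,rfl⟩ <;> simp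
  symm := ⟨fun x y h => ⟨h.1.symm, by unfold pawRel at *; tauto⟩⟩

lemma pawSub_verts (G : SimpleGraph V) [DecidableRel G.Adj] (s t u v : V) :
    (pawSub G s t u v).verts = {s, t, u, v} := rfl

lemma pawSub_adj (G : SimpleGraph V) [DecidableRel G.Adj] (s t u v x y : V) :
    (pawSub G s t u v).Adj x y ↔ G.Adj x y ∧ pawRel s t u v x y := Iff.rfl

set_option maxHeartbeats 1600000 in
lemma iso_of_cond {G : SimpleGraph V} [DecidableRel G.Adj] {s t u v : V}
    (h : cond G s t u v) : Nonempty ((pawSub G s t u v).coe ≃g pawGraph) := by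
  obtain ⟨h1, h2, h3, h4, h5, h6⟩ := h
  have nst := h1.ne; have nuv := h2.ne; have nsu := h3.ne; have nsv := h4.ne
  have hs : s ∈ (pawSub G s t u v).verts := by simp [pawSub_verts]
  have ht : t ∈ (pawSub G s t u v).verts := by simp [pawSub_verts]
  have hu : u ∈ (pawSub G s t u v).verts := by simp [pawSub_verts]
  have hv : v ∈ (pawSub G s t u v).verts := by simp [pawSub_verts]
  let e : Fin 4 ≃ ((pawSub G s t u v).verts : Set V) :=
    { toFun := ![⟨u, hu⟩, ⟨v, hv⟩, ⟨s, hs⟩, ⟨t, ht⟩]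
      invFun := fun x => if x.1 = s then 2 else if x.1 = t then 3 else if x.1 = u then 0 else 1
      left_inv := by
        intro i
        fin_cases i <;>
          simp [nst.symm, nsu.symm, nsv.symm, h5.symm, h6.symm, nuv.symm, nst, nsu, nsv, h5, h6, nuv]
      right_inv := by
        rintro ⟨x, hx⟩
        rw [pawSub_verts] at hx
        rcases hx with rfl | rfl | rfl | rfl <;>
          simp [nst.symm, nsu.symm, nsv.symm, h5.symm, h6.symm, nuv.symm, nst, nsu, nsv, h5, h6, nuv] }
  refine ⟨SimpleGraph.Iso.symm ⟨e, ?_⟩⟩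
  intro i j
  fin_cases i <;> fin_cases j <;>
    simp [e, pawGraph, pawSub_adj, pawRel, SimpleGraph.fromRel_adj,
      h1, h2, h3, h4, h1.symm, h2.symm, h3.symm, h4.symm,
      nst.symm, nsu.symm, nsv.symm, h5.symm, h6.symm, nuv.symm, nst, nsu, nsv, h5, h6, nuv] <;>
    decide

set_option maxHeartbeats 1600000 in
lemma exists_tuple {G : SimpleGraph V} [DecidableRel G.Adj] {H : G.Subgraph}
    (e : H.coe ≃g pawGraph) : ∃ s t u v, cond G s t u v ∧ pawSub G s t u v = H := by
  classical
  set f : Fin 4 → V := fun i => ((e.symm i : H.verts) : V) with hf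
  have hAdj : ∀ i j : Fin 4, pawGraph.Adj i j → H.Adj (f i) (f j) := by
    intro i j hij
    have : H.coe.Adj (e.symm i) (e.symm j) := e.symm.map_rel_iff.2 hij
    exact this
  have hinj : Function.Injective f := by
    intro i j hij
    exact e.symm.injective (Subtype.coe_injective hij)
  have fin4 : ∀ i : Fin 4, i = 0 ∨ i = 1 ∨ i = 2 ∨ i = 3 := by decide
  refine ⟨f 2, f 3, f 0, f 1, ⟨(hAdj 2 3 (by decide)).adj_sub, (hAdj 0 1 (by decide)).adj_sub,
    (hAdj 2 0 (by decide)).adj_sub, (hAdj 2 1 (by decide)).adj_sub,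
    fun hc => (by decide : (3:Fin 4) ≠ 0) (hinj hc), fun hc => (by decide : (3:Fin 4) ≠ 1) (hinj hc)⟩, ?_⟩
  have hmemf : ∀ i : Fin 4, f i ∈ H.verts := fun i => (e.symm i).2
  ext x y
  · -- verts
    rw [pawSub_verts]
    constructor
    · rintro (rfl | rfl | rfl | rfl) <;> exact hmemf _
    · intro hx
      have hx' : x = f (e ⟨x, hx⟩) := by simp [hf]
      rcases fin4 (e ⟨x, hx⟩) with h' | h' | h' | h' <;> rw [h'] at hx' <;> subst hx' <;> simp
  · -- Adj
    rw [pawSub_adj]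
    constructor
    · rintro ⟨hG, hr⟩
      rcases hr with ⟨rfl,rfl⟩|⟨rfl,rfl⟩|⟨rfl,rfl⟩|⟨rfl,rfl⟩|⟨rfl,rfl⟩|⟨rfl,rfl⟩|⟨rfl,rfl⟩|⟨rfl,rfl⟩ <;>
        first
          | exact hAdj _ _ (by decide)
          | exact (hAdj _ _ (by decide)).symm
    · intro hxy
      refine ⟨hxy.adj_sub, ?_⟩
      have hx := hxy.fst_mem
      have hy := hxy.snd_mem
      have hco : H.coe.Adj ⟨x, hx⟩ ⟨y, hy⟩ := hxy
      have hpaw : pawGraph.Adj (e ⟨x, hx⟩) (e ⟨y, hy⟩) := e.map_rel_iff.2 hco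
      have hx' : x = f (e ⟨x, hx⟩) := by simp [hf]
      have hy' : y = f (e ⟨y, hy⟩) := by simp [hf]
      rcases fin4 (e ⟨x, hx⟩) with h' | h' | h' | h' <;>
        rcases fin4 (e ⟨y, hy⟩) with h'' | h'' | h'' | h'' <;>
          rw [h'] at hx' <;> rw [h''] at hy' <;> rw [h', h''] at hpaw <;>
            first
              | exact absurd hpaw (by decide)
              | (subst hx'; subst hy'; unfold pawRel; tauto)

lemma pawRel_symm {s t u v x y : V} (h : pawRel s t u v x y) : pawRel s t u v y x := by
  unfold pawRel at *; tauto

noncomputable local instance subgraphDecEq (G : SimpleGraph V) : DecidableEq G.Subgraph :=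
  Classical.decEq _

/-- In `pawRel s t u v`, the only neighbour of the pendant `t` is `s`. -/
lemma pend {G : SimpleGraph V} [DecidableRel G.Adj] {s t u v y : V}
    (h : cond G s t u v) (hy : pawRel s t u v t y) : y = s := by
  obtain ⟨h1, h2, h3, h4, h5, h6⟩ := h
  have nst := h1.ne; have nsu := h3.ne; have nsv := h4.ne
  rcases hy with ⟨hc,rfl⟩|⟨hc,rfl⟩|⟨hc,rfl⟩|⟨hc,rfl⟩|⟨hc,rfl⟩|⟨hc,rfl⟩|⟨hc,rfl⟩|⟨hc,rfl⟩ <;>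
    first
      | rfl
      | exact hc
      | simp_all

set_option maxHeartbeats 1600000 in
lemma recovery {G : SimpleGraph V} [DecidableRel G.Adj] {s t u v s' t' u' v' : V}
    (h : cond G s t u v) (h' : cond G s' t' u' v')
    (hrel : ∀ x y, pawRel s t u v x y ↔ pawRel s' t' u' v' x y) :
    s' = s ∧ t' = t ∧ ((u' = u ∧ v' = v) ∨ (u' = v ∧ v' = u)) := by
  obtain ⟨h1, h2, h3, h4, h5, h6⟩ := h
  obtain ⟨h1', h2', h3', h4', h5', h6'⟩ := h'
  have nst := h1.ne; have nuv := h2.ne; have nsu := h3.ne; have nsv := h4.ne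
  have nst' := h1'.ne; have nuv' := h2'.ne; have nsu' := h3'.ne; have nsv' := h4'.ne
  have e1 : pawRel s t u v s' t' := (hrel _ _).2 (Or.inl ⟨rfl, rfl⟩)
  have e2 : pawRel s t u v s' u' := (hrel _ _).2 (by unfold pawRel; tauto)
  have e3 : pawRel s t u v s' v' := (hrel _ _).2 (by unfold pawRel; tauto)
  have hs : s' = s := by
    by_contra hne
    have key : ∀ y, pawRel s t u v s' y → y = s ∨ (s' = u ∧ y = v) ∨ (s' = v ∧ y = u) := by
      intro y hy
      rcases hy with ⟨hc,rfl⟩|⟨hc,rfl⟩|⟨hc,rfl⟩|⟨hc,rfl⟩|⟨hc,rfl⟩|⟨hc,rfl⟩|⟨hc,rfl⟩|⟨hc,rfl⟩ <;>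
        tauto
    rcases key _ e1 with k1|⟨k1a,k1b⟩|⟨k1a,k1b⟩ <;>
      rcases key _ e2 with k2|⟨k2a,k2b⟩|⟨k2a,k2b⟩ <;>
        rcases key _ e3 with k3|⟨k3a,k3b⟩|⟨k3a,k3b⟩ <;> simp_all
  rw [hs] at e1 e2 e3 hrel h1' h3' h4' nst' nsu' nsv'
  have hcond' : cond G s t' u' v' := ⟨h1', h2', h3', h4', h5', h6'⟩
  have ht : t' = t := by
    rcases e1 with ⟨_,rfl⟩|⟨hc,_⟩|⟨_,rfl⟩|⟨hc,_⟩|⟨_,rfl⟩|⟨hc,_⟩|⟨hc,_⟩|⟨hc,_⟩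
    · rfl
    · exact absurd hc nst
    · -- t' = u : pawRel s t' u' v' t' v holds, so v = s, contra
      refine absurd (pend hcond' ((hrel _ _).1 ?_)) nsv.symm
      unfold pawRel; tauto
    · exact absurd hc nsu
    · -- t' = v
      refine absurd (pend hcond' (pawRel_symm ((hrel _ _).1 ?_))) nsu.symm
      unfold pawRel; tauto
    · exact absurd hc nsv
    · exact absurd hc nsu
    · exact absurd hc nsv

  refine ⟨hs, ht, ?_⟩
  rw [ht] at h5' h6'
  have hu : u' = u ∨ u' = v := by
    rcases e2 with ⟨hc,rfl⟩|⟨hc,_⟩|⟨_,rfl⟩|⟨hc,_⟩|⟨_,rfl⟩|⟨hc,_⟩|⟨hc,_⟩|⟨hc,_⟩ <;> tauto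
  have hv : v' = u ∨ v' = v := by
    rcases e3 with ⟨hc,rfl⟩|⟨hc,_⟩|⟨_,rfl⟩|⟨hc,_⟩|⟨_,rfl⟩|⟨hc,_⟩|⟨hc,_⟩|⟨hc,_⟩ <;> tauto
  rcases hu with rfl|rfl <;> rcases hv with h9|h9 <;> simp_all

lemma rel_adj {G : SimpleGraph V} [DecidableRel G.Adj] {s t u v x y : V}
    (h : cond G s t u v) (hr : pawRel s t u v x y) : G.Adj x y := by
  obtain ⟨h1, h2, h3, h4, h5, h6⟩ := h
  rcases hr with ⟨rfl,rfl⟩|⟨rfl,rfl⟩|⟨rfl,rfl⟩|⟨rfl,rfl⟩|⟨rfl,rfl⟩|⟨rfl,rfl⟩|⟨rfl,rfl⟩|⟨rfl,rfl⟩ <;>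
    first | assumption | exact (by assumption : G.Adj _ _).symm

lemma cond_swap {G : SimpleGraph V} [DecidableRel G.Adj] {s t u v : V}
    (h : cond G s t u v) : cond G s t v u :=
  ⟨h.1, h.2.1.symm, h.2.2.2.1, h.2.2.1, h.2.2.2.2.2, h.2.2.2.2.1⟩

lemma pawSub_swap (G : SimpleGraph V) [DecidableRel G.Adj] (s t u v : V) :
    pawSub G s t v u = pawSub G s t u v := by
  ext x y
  · rw [pawSub_verts, pawSub_verts]
    constructor <;> (rintro (rfl|rfl|rfl|rfl) <;> simp)
  · rw [pawSub_adj, pawSub_adj]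
    constructor <;> (rintro ⟨hG, hr⟩; exact ⟨hG, by unfold pawRel at *; tauto⟩)

def tupleSet (G : SimpleGraph V) [DecidableRel G.Adj] : Finset (V × V × V × V) :=
  univ.filter fun q => cond G q.1 q.2.1 q.2.2.1 q.2.2.2

def toSub (G : SimpleGraph V) [DecidableRel G.Adj] : V × V × V × V → G.Subgraph :=
  fun q => pawSub G q.1 q.2.1 q.2.2.1 q.2.2.2

lemma mem_tupleSet {G : SimpleGraph V} [DecidableRel G.Adj] {q : V × V × V × V} :
    q ∈ tupleSet G ↔ cond G q.1 q.2.1 q.2.2.1 q.2.2.2 := by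
  simp [tupleSet]

lemma toSub_eq_iff {G : SimpleGraph V} [DecidableRel G.Adj] {p q : V × V × V × V}
    (hp : p ∈ tupleSet G) (hq : q ∈ tupleSet G) (heq : toSub G p = toSub G q) :
    p = q ∨ p = (q.1, q.2.1, q.2.2.2, q.2.2.1) := by
  rw [mem_tupleSet] at hp hq
  obtain ⟨s, t, u, v⟩ := p
  obtain ⟨s', t', u', v'⟩ := q
  simp only at hp hq ⊢
  have hadj : ∀ x y, (pawSub G s t u v).Adj x y ↔ (pawSub G s' t' u' v').Adj x y := by
    rw [show pawSub G s t u v = pawSub G s' t' u' v' from heq]; intro x y; rfl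
  have hrel : ∀ x y, pawRel s' t' u' v' x y ↔ pawRel s t u v x y := by
    intro x y
    constructor
    · intro hr
      exact (((hadj x y).2 ⟨rel_adj hq hr, hr⟩)).2
    · intro hr
      exact (((hadj x y).1 ⟨rel_adj hp hr, hr⟩)).2
  obtain ⟨hs, ht, huv⟩ := recovery hq hp hrel
  rcases huv with ⟨hu, hv⟩ | ⟨hu, hv⟩
  · left; simp [hs, ht, hu, hv]
  · right; simp [hs, ht, hu, hv]

lemma fiber_card {G : SimpleGraph V} [DecidableRel G.Adj] {q : V × V × V × V}
    (hq : q ∈ tupleSet G) :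
    ((tupleSet G).filter (fun p => toSub G p = toSub G q)).card = 2 := by
  have hswap_mem : (q.1, q.2.1, q.2.2.2, q.2.2.1) ∈ tupleSet G := by
    rw [mem_tupleSet] at hq ⊢; exact cond_swap hq
  have hswap_sub : toSub G (q.1, q.2.1, q.2.2.2, q.2.2.1) = toSub G q := by
    simpa [toSub] using pawSub_swap G q.1 q.2.1 q.2.2.1 q.2.2.2
  have hne : q ≠ (q.1, q.2.1, q.2.2.2, q.2.2.1) := by
    intro hc
    have huv := (mem_tupleSet.1 hq).2.1.ne
    obtain ⟨s, t, u, v⟩ := q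
    simp only [Prod.mk.injEq] at hc
    exact huv (hc.2.2.1.trans rfl ▸ hc.2.2.1) |>.elim
  have : (tupleSet G).filter (fun p => toSub G p = toSub G q) =
      {q, (q.1, q.2.1, q.2.2.2, q.2.2.1)} := by
    ext p
    simp only [mem_filter, mem_insert, mem_singleton]
    constructor
    · rintro ⟨hp, hpq⟩
      exact toSub_eq_iff hp hq hpq
    · rintro (rfl | rfl)
      · exact ⟨hq, rfl⟩
      · exact ⟨hswap_mem, hswap_sub⟩
  rw [this, Finset.card_insert_of_notMem (by simpa using hne), Finset.card_singleton]

lemma tupleSet_card (G : SimpleGraph V) [DecidableRel G.Adj] :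
    (tupleSet G).card = 2 * ((tupleSet G).image (toSub G)).card := by
  rw [Finset.card_eq_sum_card_image (toSub G) (tupleSet G)]
  rw [Finset.sum_congr rfl (fun b hb => ?_), Finset.sum_const, smul_eq_mul, mul_comm]
  obtain ⟨q, hq, rfl⟩ := Finset.mem_image.1 hb
  exact fiber_card hq


lemma mem_image_iff {G : SimpleGraph V} [DecidableRel G.Adj] (H : G.Subgraph) :
    H ∈ (tupleSet G).image (toSub G) ↔ Nonempty (H.coe ≃g pawGraph) := by
  constructor
  · rintro hH
    obtain ⟨q, hq, rfl⟩ := Finset.mem_image.1 hH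
    exact iso_of_cond (mem_tupleSet.1 hq)
  · rintro ⟨e⟩
    obtain ⟨s, t, u, v, hc, hEq⟩ := exists_tuple e
    exact Finset.mem_image.2 ⟨(s, t, u, v), mem_tupleSet.2 hc, hEq⟩

lemma copyCount_eq (G : SimpleGraph V) [DecidableRel G.Adj] :
    copyCount G pawGraph = ((tupleSet G).image (toSub G)).card := by
  rw [copyCount, ← Nat.card_eq_finsetCard]
  exact Nat.card_congr (Equiv.subtypeEquivRight fun H => (mem_image_iff H).symm)

lemma key (G : SimpleGraph V) [DecidableRel G.Adj] (s t u v : V) :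
    (if G.Adj s t ∧ G.Adj u v ∧ s ≠ u ∧ s ≠ v ∧ t ≠ u ∧ t ≠ v then
        (a G s u + a G t v) * (a G s v + a G t u) else 0) =
      (if cond G s t u v then (1 : ℚ) else 0) + (if cond G u v s t then 1 else 0) +
        (if cond G v u s t then 1 else 0) + (if cond G t s u v then 1 else 0) := by
  by_cases hP : G.Adj s t ∧ G.Adj u v ∧ s ≠ u ∧ s ≠ v ∧ t ≠ u ∧ t ≠ v
  · obtain ⟨h1, h2, h3, h4, h5, h6⟩ := hP
    rw [if_pos ⟨h1, h2, h3, h4, h5, h6⟩]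
    have c1 : (if cond G s t u v then (1 : ℚ) else 0) =
        (if G.Adj s u then (1 : ℚ) else 0) * (if G.Adj s v then (1 : ℚ) else 0) := by
      by_cases hsu : G.Adj s u <;> by_cases hsv : G.Adj s v <;>
        simp [cond, hsu, hsv, h1, h2, h5, h6]
    have c2 : (if cond G u v s t then (1 : ℚ) else 0) =
        (if G.Adj s u then (1 : ℚ) else 0) * (if G.Adj t u then (1 : ℚ) else 0) := by
      by_cases hsu : G.Adj s u <;> by_cases htu : G.Adj t u <;>
        simp [cond, G.adj_comm u s, G.adj_comm u t, hsu, htu, h1, h2, h4.symm, h6.symm]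
    have c3 : (if cond G v u s t then (1 : ℚ) else 0) =
        (if G.Adj s v then (1 : ℚ) else 0) * (if G.Adj t v then (1 : ℚ) else 0) := by
      by_cases hsv : G.Adj s v <;> by_cases htv : G.Adj t v <;>
        simp [cond, G.adj_comm v u, G.adj_comm v s, G.adj_comm v t, hsv, htv, h1, h2,
          h3.symm, h5.symm]
    have c4 : (if cond G t s u v then (1 : ℚ) else 0) =
        (if G.Adj t u then (1 : ℚ) else 0) * (if G.Adj t v then (1 : ℚ) else 0) := by
      by_cases htu : G.Adj t u <;> by_cases htv : G.Adj t v <;>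
        simp [cond, G.adj_comm t s, htu, htv, h1, h2, h3, h4]
    rw [c1, c2, c3, c4]; unfold a; ring
  · rw [if_neg hP]
    have n1 : ¬ cond G s t u v := fun hc =>
      hP ⟨hc.1, hc.2.1, hc.2.2.1.ne, hc.2.2.2.1.ne, hc.2.2.2.2.1, hc.2.2.2.2.2⟩
    have n2 : ¬ cond G u v s t := fun hc =>
      hP ⟨hc.2.1, hc.1, hc.2.2.1.ne.symm, hc.2.2.2.2.1.symm, hc.2.2.2.1.ne.symm,
        hc.2.2.2.2.2.symm⟩
    have n3 : ¬ cond G v u s t := fun hc =>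
      hP ⟨hc.2.1, hc.1.symm, hc.2.2.2.2.1.symm, hc.2.2.1.ne.symm, hc.2.2.2.2.2.symm,
        hc.2.2.2.1.ne.symm⟩
    have n4 : ¬ cond G t s u v := fun hc =>
      hP ⟨hc.1.symm, hc.2.1, hc.2.2.2.2.1, hc.2.2.2.2.2, hc.2.2.1.ne, hc.2.2.2.1.ne⟩
    rw [if_neg n1, if_neg n2, if_neg n3, if_neg n4]; norm_num

lemma sum_ind (G : SimpleGraph V) [DecidableRel G.Adj] :
    (∑ q : V × V × V × V, if cond G q.1 q.2.1 q.2.2.1 q.2.2.2 then (1 : ℚ) else 0) =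
      ((tupleSet G).card : ℚ) := by
  rw [tupleSet, Finset.sum_boole]

lemma main_sum (G : SimpleGraph V) [DecidableRel G.Adj] :
    (∑ s, ∑ t, ∑ u, ∑ v,
        if G.Adj s t ∧ G.Adj u v ∧ s ≠ u ∧ s ≠ v ∧ t ≠ u ∧ t ≠ v then
          (a G s u + a G t v) * (a G s v + a G t u) else 0) =
      4 * ((tupleSet G).card : ℚ) := by
  have hconv : ∀ F : V → V → V → V → ℚ,
      (∑ q : V × V × V × V, F q.1 q.2.1 q.2.2.1 q.2.2.2) = ∑ s, ∑ t, ∑ u, ∑ v, F s t u v := by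
    intro F
    rw [Fintype.sum_prod_type]
    refine Finset.sum_congr rfl fun s _ => ?_
    rw [Fintype.sum_prod_type]
    refine Finset.sum_congr rfl fun t _ => ?_
    rw [Fintype.sum_prod_type]
  rw [← hconv]
  have : (∑ q : V × V × V × V,
      if G.Adj q.1 q.2.1 ∧ G.Adj q.2.2.1 q.2.2.2 ∧ q.1 ≠ q.2.2.1 ∧ q.1 ≠ q.2.2.2 ∧
          q.2.1 ≠ q.2.2.1 ∧ q.2.1 ≠ q.2.2.2 then
        (a G q.1 q.2.2.1 + a G q.2.1 q.2.2.2) * (a G q.1 q.2.2.2 + a G q.2.1 q.2.2.1) else 0) =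
      ∑ q : V × V × V × V,
        ((if cond G q.1 q.2.1 q.2.2.1 q.2.2.2 then (1 : ℚ) else 0) +
          (if cond G q.2.2.1 q.2.2.2 q.1 q.2.1 then 1 else 0) +
          (if cond G q.2.2.2 q.2.2.1 q.1 q.2.1 then 1 else 0) +
          (if cond G q.2.1 q.1 q.2.2.1 q.2.2.2 then 1 else 0)) :=
    Finset.sum_congr rfl fun q _ => key G q.1 q.2.1 q.2.2.1 q.2.2.2
  rw [this]
  simp only [Finset.sum_add_distrib]
  have e2 : (∑ q : V × V × V × V, if cond G q.2.2.1 q.2.2.2 q.1 q.2.1 then (1 : ℚ) else 0) =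
      ∑ q : V × V × V × V, if cond G q.1 q.2.1 q.2.2.1 q.2.2.2 then (1 : ℚ) else 0 := by
    exact Fintype.sum_equiv
      ⟨fun q => (q.2.2.1, q.2.2.2, q.1, q.2.1), fun q => (q.2.2.1, q.2.2.2, q.1, q.2.1),
        fun ⟨a, b, c, d⟩ => rfl, fun ⟨a, b, c, d⟩ => rfl⟩ _ _ (fun q => rfl)
  have e3 : (∑ q : V × V × V × V, if cond G q.2.2.2 q.2.2.1 q.1 q.2.1 then (1 : ℚ) else 0) =
      ∑ q : V × V × V × V, if cond G q.1 q.2.1 q.2.2.1 q.2.2.2 then (1 : ℚ) else 0 := by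
    exact Fintype.sum_equiv
      ⟨fun q => (q.2.2.2, q.2.2.1, q.1, q.2.1), fun q => (q.2.2.1, q.2.2.2, q.2.1, q.1),
        fun ⟨a, b, c, d⟩ => rfl, fun ⟨a, b, c, d⟩ => rfl⟩ _ _ (fun q => rfl)
  have e4 : (∑ q : V × V × V × V, if cond G q.2.1 q.1 q.2.2.1 q.2.2.2 then (1 : ℚ) else 0) =
      ∑ q : V × V × V × V, if cond G q.1 q.2.1 q.2.2.1 q.2.2.2 then (1 : ℚ) else 0 := by
    exact Fintype.sum_equiv
      ⟨fun q => (q.2.1, q.1, q.2.2.1, q.2.2.2), fun q => (q.2.1, q.1, q.2.2.1, q.2.2.2),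
        fun ⟨a, b, c, d⟩ => rfl, fun ⟨a, b, c, d⟩ => rfl⟩ _ _ (fun q => rfl)
  rw [e2, e3, e4, sum_ind]
  ring


theorem stmt3 (G : SimpleGraph V) [DecidableRel G.Adj] :
    (copyCount G pawGraph : ℚ) =
      Qsum G (fun s t u v => (a G s u + a G t v) * (a G s v + a G t u)) := by
  rw [Qsum, main_sum, copyCount_eq]
  have h2 : ((tupleSet G).card : ℚ) = 2 * (((tupleSet G).image (toSub G)).card : ℚ) := by
    rw [tupleSet_card]; push_cast; ring
  rw [h2]; ring


end CrossVar
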